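/- Let F be a linearly ordered field with integer part I and let α, β ∈ F be distinct irrationals with α, β > 1. Then N_α ≠ N_β. -/

import Mathlib

/-- `N_α`: the set `{⌊n·α⌋ : n ∈ I, n ≥ 0}`, where `fl` is the floor function
associated to the integer part `I` of `F`. -/
def Nset {F : Type*} [Field F] [LinearOrder F] [IsStrictOrderedRing F] (I : Subring F) (fl : F → F) (α : F) : Set F :=
  {y | ∃ n, n ∈ I ∧ 0 ≤ n ∧ y = fl (n * α)}

/-- An element of `F` is rational (with respect to `I`) if it lies in the
fraction field of `I` viewed inside `F`. -/
def IsRat {F : Type*} [Field F] [LinearOrder F] [IsStrictOrderedRing F] (I : Subring F) (α : F) : Prop :=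
  ∃ p ∈ I, ∃ q ∈ I, q ≠ 0 ∧ α = p / q

namespace Stmt6Aux

variable {F : Type*} [Field F] [LinearOrder F] [IsStrictOrderedRing F] {I : Subring F} {fl : F → F}

section Basic

variable (hdisc : ∀ x ∈ I, ¬(0 < x ∧ x < 1))
variable (hfl : ∀ x : F, fl x ∈ I ∧ fl x ≤ x ∧ x < fl x + 1)

include hdisc hfl

lemma int_one_le {n : F} (hn : n ∈ I) (h : 0 < n) : 1 ≤ n := by
  by_contra h'
  exact hdisc n hn ⟨h, lt_of_not_ge h'⟩

lemma int_add_one_le {a b : F} (ha : a ∈ I) (hb : b ∈ I) (h : a < b) : a + 1 ≤ b := by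
  have := int_one_le hdisc hfl (sub_mem hb ha) (by linarith)
  linarith

lemma fl_unique {x a : F} (ha : a ∈ I) (h1 : a ≤ x) (h2 : x < a + 1) : fl x = a := by
  obtain ⟨hI, hle, hlt⟩ := hfl x
  rcases lt_trichotomy (fl x) a with h | h | h
  · have := int_add_one_le hdisc hfl hI ha h
    linarith
  · exact h
  · have := int_add_one_le hdisc hfl ha hI h
    linarith

lemma fl_int {n : F} (hn : n ∈ I) : fl n = n :=
  fl_unique hdisc hfl hn le_rfl (by linarith)

omit hdisc hfl in
lemma irr_ne {α n m : F} (hirr : ¬ IsRat I α) (hn : n ∈ I) (hm : m ∈ I)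
    (hn0 : n ≠ 0) : n * α ≠ m := by
  intro h
  exact hirr ⟨m, hm, n, hn, hn0, by rw [eq_div_iff hn0, mul_comm]; exact h⟩

/-- The central contradiction: if some multiple `K·α` of `α` is at distance `> 1`
from all the multiples of `β` flanking it, then `⌊Kα⌋ ∈ N_α` cannot lie in `N_β`. -/
lemma key_contra {α β K L : F} (hβ0 : 0 < β) (hK : K ∈ I) (hL : L ∈ I) (hK0 : 0 ≤ K)
    (hw1 : 1 < K * α - L * β) (hw2 : K * α - L * β < β - 1)
    (hs : Nset I fl α = Nset I fl β) : False := by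
  have hmem : fl (K * α) ∈ Nset I fl α := ⟨K, hK, hK0, rfl⟩
  rw [hs] at hmem
  obtain ⟨u, huI, hu0, hMe⟩ := hmem
  obtain ⟨hIK, h1K, h2K⟩ := hfl (K * α)
  obtain ⟨hIu, h1u, h2u⟩ := hfl (u * β)
  rw [← hMe] at h1u h2u
  -- now : fl (K*α) ≤ u*β < fl (K*α) + 1, and fl (K*α) ≤ K*α < fl (K*α) + 1
  have hb1 : K * α - u * β < 1 := by linarith
  have hb2 : -1 < K * α - u * β := by linarith
  have hj : K * α - u * β = (L - u) * β + (K * α - L * β) := by ring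
  rcases lt_trichotomy (L - u) 0 with h | h | h
  · -- L - u ≤ -1, so the quantity is < -1
    have h1 : 0 < u - L := by linarith
    have := int_one_le hdisc hfl (sub_mem huI hL) h1
    nlinarith
  · rw [h, zero_mul, zero_add] at hj
    linarith
  · have := int_one_le hdisc hfl (sub_mem hL huI) h
    nlinarith

/-- Main case: `2 < α < β` implies `N_α ≠ N_β` (no irrationality needed here). -/
lemma key' {α β : F} (hα2 : 2 < α) (hab : α < β)
    (hs : Nset I fl α = Nset I fl β) : False := by
  have hβ0 : 0 < β := by linarith
  by_cases hγ : 1 < β - α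
  · exact key_contra hdisc hfl hβ0 (one_mem I) (zero_mem I) zero_le_one
      (by rw [one_mul, zero_mul]; linarith)
      (by rw [one_mul, zero_mul]; linarith) hs
  · push_neg at hγ
    set γ := β - α with hγdef
    have hγ0 : 0 < γ := by simp only [hγdef]; linarith
    set L := fl (1 / γ) with hLdef
    obtain ⟨hLI, hL1, hL2⟩ := hfl (1 / γ)
    rw [← hLdef] at hLI hL1 hL2
    have h1γ : 1 ≤ 1 / γ := by rw [le_div_iff₀ hγ0]; linarith
    have hL0 : 0 ≤ L := by linarith
    have hKI : L + 1 ∈ I := add_mem hLI (one_mem I)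
    have hK0 : (0 : F) ≤ L + 1 := by linarith
    -- K*γ bounds
    have hKγ1 : 1 < (L + 1) * γ := by
      rw [div_lt_iff₀ hγ0] at hL2
      linarith
    have hKγ2 : (L + 1) * γ < β - 1 := by
      have hLγ : L * γ ≤ 1 := by
        rw [le_div_iff₀ hγ0] at hL1
        linarith
      have : (L + 1) * γ ≤ 1 + γ := by nlinarith
      have hγle : γ ≤ 1 := hγ
      simp only [hγdef] at this ⊢
      nlinarith
    have hw : (L + 1) * α - L * β = β - (L + 1) * γ := by
      simp only [hγdef]; ring
    exact key_contra hdisc hfl hβ0 hKI hLI hK0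
      (by rw [hw]; linarith) (by rw [hw]; linarith) hs

/-- Membership criterion: for `m ≥ 1` in `I`, `m ∈ N_α` iff there is an element of `I`
strictly between `m/α` and `(m+1)/α`. -/
lemma mem_iff {α m : F} (hα1 : 1 < α) (hirr : ¬ IsRat I α) (hm : m ∈ I) (hm1 : 1 ≤ m) :
    m ∈ Nset I fl α ↔ fl (m / α) + 1 ≤ fl ((m + 1) / α) := by
  have hα0 : 0 < α := by linarith
  obtain ⟨haI, ha1, ha2⟩ := hfl (m / α)
  obtain ⟨hbI, hb1, hb2⟩ := hfl ((m + 1) / α)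
  constructor
  · rintro ⟨n, hnI, hn0, he⟩
    have hn0' : n ≠ 0 := by
      rintro rfl
      rw [zero_mul, fl_int hdisc hfl (zero_mem I)] at he
      linarith
    obtain ⟨hflI, hfl1, hfl2⟩ := hfl (n * α)
    rw [← he] at hfl1 hfl2
    have hne : n * α ≠ m := irr_ne hirr hnI hm hn0'
    have hlt : m < n * α := lt_of_le_of_ne hfl1 (Ne.symm hne)
    -- fl(m/α) < n
    have h1 : m / α < n := by rw [div_lt_iff₀ hα0]; linarith [mul_comm n α]
    have h2 : fl (m / α) < n := lt_of_le_of_lt ha1 h1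
    have h3 := int_add_one_le hdisc hfl haI hnI h2
    -- n ≤ fl((m+1)/α)
    have h4 : n ≤ fl ((m + 1) / α) := by
      by_contra h'
      have := int_add_one_le hdisc hfl hbI hnI (lt_of_not_ge h')
      have : (m + 1) / α < n := by linarith
      rw [div_lt_iff₀ hα0] at this
      nlinarith [mul_comm n α]
    linarith
  · intro hc
    set n := fl ((m + 1) / α) with hn
    have hma : 0 < m / α := div_pos (by linarith) hα0
    have ha0 : 0 ≤ fl (m / α) := by
      by_contra h'
      have := int_add_one_le hdisc hfl haI (zero_mem I) (lt_of_not_ge h')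
      have : m / α < 0 := by linarith
      linarith
    have hn1 : (1 : F) ≤ n := by linarith
    have hn0' : n ≠ 0 := by intro h; rw [h] at hn1; linarith
    have hlow : m < n * α := by
      have : m / α < n := by linarith
      rw [div_lt_iff₀ hα0] at this
      linarith [mul_comm n α]
    have hhigh : n * α < m + 1 := by
      have h5 : n * α ≤ m + 1 := by
        have : (n : F) ≤ (m + 1) / α := hb1
        rw [le_div_iff₀ hα0] at this
        linarith [mul_comm n α]
      exact lt_of_le_of_ne h5 (irr_ne hirr hbI (add_mem hm (one_mem I)) hn0')
    exact ⟨n, hbI, by linarith, (fl_unique hdisc hfl hm (le_of_lt hlow) hhigh).symm⟩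

/-- `⌊m/α⌋ + ⌊m − m/α⌋ = m − 1` for `m ∈ I`, `m ≥ 1`, `α > 1` irrational. -/
lemma sum_fl {α m : F} (hα1 : 1 < α) (hirr : ¬ IsRat I α) (hm : m ∈ I) (hm1 : 1 ≤ m) :
    fl (m / α) + fl (m - m / α) = m - 1 := by
  have hα0 : 0 < α := by linarith
  set x := m / α with hx
  have hx0 : 0 < x := div_pos (by linarith) hα0
  obtain ⟨hxI, hx1, hx2⟩ := hfl x
  obtain ⟨hyI, hy1, hy2⟩ := hfl (m - x)
  have hxs : fl x < x := by
    rcases lt_or_eq_of_le hx1 with h | h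
    · exact h
    · exfalso
      have hne : fl x ≠ 0 := by rw [h]; exact ne_of_gt hx0
      refine irr_ne hirr hxI hm hne ?_
      rw [h, hx]
      field_simp
  have hys : fl (m - x) < m - x := by
    rcases lt_or_eq_of_le hy1 with h | h
    · exact h
    · exfalso
      have hxmem : x ∈ I := by
        have : x = m - fl (m - x) := by rw [h]; ring
        rw [this]
        exact sub_mem hm hyI
      have := fl_int hdisc hfl hxmem
      linarith
  -- s := m - (fl x + fl (m-x)) ∈ (0, 2) ∩ I, hence s = 1
  set s := m - (fl x + fl (m - x)) with hs
  have hsI : s ∈ I := sub_mem hm (add_mem hxI hyI)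
  have hs0 : 0 < s := by simp only [hs]; linarith
  have hs2 : s < 2 := by simp only [hs]; linarith
  have hs1 : 1 ≤ s := int_one_le hdisc hfl hsI hs0
  have hs1' : s ≤ 1 := by
    by_contra h'
    exact hdisc (s - 1) (sub_mem hsI (one_mem I)) ⟨by linarith, by linarith⟩
  have : s = 1 := le_antisymm hs1' hs1
  simp only [hs] at this
  linarith

omit hdisc hfl in
lemma conj_irr {α : F} (hα1 : 1 < α) (hirr : ¬ IsRat I α) : ¬ IsRat I (α / (α - 1)) := by
  rintro ⟨p, hp, q, hq, hq0, hpq⟩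
  have hα1' : α - 1 ≠ 0 := by intro h; rw [sub_eq_zero] at h; rw [h] at hα1; linarith
  rw [div_eq_div_iff hα1' hq0] at hpq
  -- hpq : α * q = p * (α - 1)
  have hpq0 : p - q ≠ 0 := by
    intro h
    rw [sub_eq_zero] at h
    subst h
    have : (p : F) = 0 := by nlinarith
    exact hq0 this
  refine hirr ⟨p, hp, p - q, sub_mem hp hq, hpq0, ?_⟩
  rw [eq_div_iff hpq0]
  linear_combination -hpq

/-- Beatty complementarity: for `1 < α < 2` irrational and `m ∈ I` with `m ≥ 1`,
`m` belongs to `N_{α/(α-1)}` iff it does not belong to `N_α`. -/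
lemma mem_conj_iff {α m : F} (hα1 : 1 < α) (hα2 : α < 2) (hirr : ¬ IsRat I α)
    (hm : m ∈ I) (hm1 : 1 ≤ m) :
    m ∈ Nset I fl (α / (α - 1)) ↔ m ∉ Nset I fl α := by
  have hα1' : (0 : F) < α - 1 := by linarith
  have hA1 : 1 < α / (α - 1) := by rw [lt_div_iff₀ hα1']; linarith
  have hAirr : ¬ IsRat I (α / (α - 1)) := conj_irr hα1 hirr
  have hdivA : m / (α / (α - 1)) = m - m / α := by
    field_simp
  have hdivA' : (m + 1) / (α / (α - 1)) = (m + 1) - (m + 1) / α := by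
    field_simp
  have hS1 := sum_fl hdisc hfl hα1 hirr hm hm1
  have hS2 := sum_fl hdisc hfl hα1 hirr (add_mem hm (one_mem I)) (by linarith)
  have hmono : fl (m / α) ≤ fl ((m + 1) / α) := by
    obtain ⟨haI, ha1, ha2⟩ := hfl (m / α)
    obtain ⟨hbI, hb1, hb2⟩ := hfl ((m + 1) / α)
    by_contra h'
    have := int_add_one_le hdisc hfl hbI haI (lt_of_not_ge h')
    have h1 : m / α ≤ (m + 1) / α := by
      have hα0 : (0 : F) < α := by linarith
      gcongr
      linarith
    linarith
  rw [mem_iff hdisc hfl hα1 hirr hm hm1, mem_iff hdisc hfl hA1 hAirr hm hm1,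
    hdivA, hdivA']
  obtain ⟨haI, _, _⟩ := hfl (m / α)
  obtain ⟨hbI, _, _⟩ := hfl ((m + 1) / α)
  constructor
  · intro h h'
    linarith
  · intro h'
    have hb : fl ((m + 1) / α) ≤ fl (m / α) := by
      by_contra h''
      exact h' (int_add_one_le hdisc hfl haI hbI (lt_of_not_ge h''))
    linarith


/-- Mixed case: `1 < α < 2 < β` gives `1 ∈ N_α \\ N_β`. -/
lemma mixed {α β : F} (hα1 : 1 < α) (hα2 : α < 2) (hβ2 : 2 < β)
    (hs : Nset I fl α = Nset I fl β) : False := by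
  have hflα : fl α = 1 := fl_unique hdisc hfl (one_mem I) (le_of_lt hα1) (by linarith)
  have h1 : (1 : F) ∈ Nset I fl α := ⟨1, one_mem I, zero_le_one, by rw [one_mul, hflα]⟩
  rw [hs] at h1
  obtain ⟨u, huI, hu0, hue⟩ := h1
  rcases eq_or_lt_of_le hu0 with h0 | hpos
  · rw [← h0, zero_mul, fl_int hdisc hfl (zero_mem I)] at hue
    exact one_ne_zero hue
  · have hu1 : (1 : F) ≤ u := int_one_le hdisc hfl huI hpos
    obtain ⟨hI2, hl2, hr2⟩ := hfl (u * β)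
    rw [← hue] at hr2
    nlinarith

/-- Passing to Beatty conjugates preserves equality of the `Nset`s. -/
lemma conj_subset {α β : F} (hα1 : 1 < α) (hα2 : α < 2) (hαirr : ¬ IsRat I α)
    (hβ1 : 1 < β) (hβ2 : β < 2) (hβirr : ¬ IsRat I β)
    (hs : Nset I fl α = Nset I fl β) :
    Nset I fl (α / (α - 1)) ⊆ Nset I fl (β / (β - 1)) := by
  rintro y ⟨n, hnI, hn0, rfl⟩
  rcases eq_or_lt_of_le hn0 with h0 | hpos
  · exact ⟨0, zero_mem I, le_rfl, by rw [← h0, zero_mul, zero_mul]⟩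
  · have hn1 : (1 : F) ≤ n := int_one_le hdisc hfl hnI hpos
    have hα1' : (0 : F) < α - 1 := by linarith
    have hA2 : 2 < α / (α - 1) := by rw [lt_div_iff₀ hα1']; nlinarith
    have hnA : 2 < n * (α / (α - 1)) := by nlinarith
    obtain ⟨hyI, hy1, hy2⟩ := hfl (n * (α / (α - 1)))
    have hy1' : 1 ≤ fl (n * (α / (α - 1))) := by linarith
    have hmemA : fl (n * (α / (α - 1))) ∈ Nset I fl (α / (α - 1)) := ⟨n, hnI, hn0, rfl⟩
    have hnot : fl (n * (α / (α - 1))) ∉ Nset I fl α :=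
      (mem_conj_iff hdisc hfl hα1 hα2 hαirr hyI hy1').1 hmemA
    rw [hs] at hnot
    exact (mem_conj_iff hdisc hfl hβ1 hβ2 hβirr hyI hy1').2 hnot

end Basic

end Stmt6Aux

theorem stmt_6 {F : Type*} [Field F] [LinearOrder F] [IsStrictOrderedRing F] (I : Subring F) (fl : F → F)
    (hdisc : ∀ x ∈ I, ¬(0 < x ∧ x < 1))
    (hfl : ∀ x : F, fl x ∈ I ∧ fl x ≤ x ∧ x < fl x + 1)
    (α β : F) (hα1 : 1 < α) (hβ1 : 1 < β)
    (hαirr : ¬ IsRat I α) (hβirr : ¬ IsRat I β) (hne : α ≠ β) :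
    Nset I fl α ≠ Nset I fl β := by
  intro hs
  have h2I : (2 : F) ∈ I := by
    have := add_mem (one_mem I) (one_mem I)
    rw [one_add_one_eq_two] at this
    exact this
  have two_rat : IsRat I (2 : F) := ⟨2, h2I, 1, one_mem I, one_ne_zero, by norm_num⟩
  have hα2ne : α ≠ 2 := fun h => hαirr (h ▸ two_rat)
  have hβ2ne : β ≠ 2 := fun h => hβirr (h ▸ two_rat)
  rcases lt_or_gt_of_ne hα2ne with hαlt | hαgt
  · rcases lt_or_gt_of_ne hβ2ne with hβlt | hβgt
    · -- both in (1, 2): pass to conjugates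
      have hAirr := Stmt6Aux.conj_irr hα1 hαirr
      have hBirr := Stmt6Aux.conj_irr hβ1 hβirr
      have hα1' : (0 : F) < α - 1 := by linarith
      have hβ1' : (0 : F) < β - 1 := by linarith
      have hA2 : 2 < α / (α - 1) := by rw [lt_div_iff₀ hα1']; nlinarith
      have hB2 : 2 < β / (β - 1) := by rw [lt_div_iff₀ hβ1']; nlinarith
      have hconj : Nset I fl (α / (α - 1)) = Nset I fl (β / (β - 1)) :=
        Set.Subset.antisymm
          (Stmt6Aux.conj_subset hdisc hfl hα1 hαlt hαirr hβ1 hβlt hβirr hs)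
          (Stmt6Aux.conj_subset hdisc hfl hβ1 hβlt hβirr hα1 hαlt hαirr hs.symm)
      have hABne : α / (α - 1) ≠ β / (β - 1) := by
        intro h
        apply hne
        rw [div_eq_div_iff (ne_of_gt hα1') (ne_of_gt hβ1')] at h
        linear_combination -h
      rcases lt_trichotomy (α / (α - 1)) (β / (β - 1)) with h | h | h
      · exact Stmt6Aux.key' hdisc hfl hA2 h hconj
      · exact hABne h
      · exact Stmt6Aux.key' hdisc hfl hB2 h hconj.symm
    · exact Stmt6Aux.mixed hdisc hfl hα1 hαlt hβgt hs
  · rcases lt_or_gt_of_ne hβ2ne with hβlt | hβgt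
    · exact Stmt6Aux.mixed hdisc hfl hβ1 hβlt hαgt hs.symm
    · rcases lt_trichotomy α β with h | h | h
      · exact Stmt6Aux.key' hdisc hfl hαgt h hs
      · exact hne h
      · exact Stmt6Aux.key' hdisc hfl hβgt h hs.symm
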